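/- Auxiliary to left monotonicity: if f s₁⋯s_n ⊐⊐ t and f s₁⋯s_n u is well-typed with n+1 ∈ π(f), then f s₁⋯s_n u ⊐⊐ t. -/

import Mathlib

namespace Horpo

/-- Simple types over a single collapsed sort ι. -/
inductive Ty where
  | base : Ty
  | arrow : Ty → Ty → Ty
deriving DecidableEq

/-- The argument types of a type: argTypes (σ₁ ⇒ … ⇒ σ_m ⇒ ι) = [σ₁,…,σ_m]. -/
def Ty.argTypes : Ty → List Ty
  | .base => []
  | .arrow a b => a :: b.argTypes

/-- A signature: typed function symbols over F, typed variables over V,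
    a precedence ⊵ (`prec`) and a filter π (`pi`, using 1-based indices). -/
structure Sig (F V : Type) where
  fty : F → Ty
  vty : V → Ty
  prec : F → F → Prop
  pi : F → Finset ℕ

variable {F V : Type}

/-- f ≡ g : equivalence part of the precedence. -/
def Sig.equiv (S : Sig F V) (f g : F) : Prop := S.prec f g ∧ S.prec g f

/-- f ⊳ g : strict part of the precedence. -/
def Sig.sgt (S : Sig F V) (f g : F) : Prop := S.prec f g ∧ ¬ S.prec g f

/-- maximal arity m of a symbol f :: σ₁ ⇒ … ⇒ σ_m ⇒ ι. -/
def Sig.arity (S : Sig F V) (f : F) : ℕ := (S.fty f).argTypes.length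

/-- Applicative (curried) terms. -/
inductive Tm (F V : Type) where
  | fv : V → Tm F V
  | fn : F → Tm F V
  | app : Tm F V → Tm F V → Tm F V

/-- h t₁ ⋯ t_n -/
def Tm.appList (h : Tm F V) (ts : List (Tm F V)) : Tm F V := ts.foldl Tm.app h

/-- Partial typing function. -/
def typeOf (S : Sig F V) : Tm F V → Option Ty
  | .fv x => some (S.vty x)
  | .fn f => some (S.fty f)
  | .app s t =>
    match typeOf S s, typeOf S t with
    | some (.arrow a b), some c => if a = c then some b else none
    | _, _ => none

/-- s and t are well-typed with the same type (structure). -/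
def sameTy (S : Sig F V) (s t : Tm F V) : Prop :=
  ∃ τ, typeOf S s = some τ ∧ typeOf S t = some τ

/-- The equivalence relation ≈, by the rules (Eq-mono) and (Eq-args). -/
inductive Approx (S : Sig F V) : Tm F V → Tm F V → Prop where
  | mono (x : V) (ss ts : List (Tm F V)) :
      ss.length = ts.length →
      (∀ (i : ℕ) (h1 : i < ss.length) (h2 : i < ts.length),
        Approx S (ss.get ⟨i, h1⟩) (ts.get ⟨i, h2⟩)) →
      sameTy S (Tm.appList (.fv x) ss) (Tm.appList (.fv x) ts) →
      Approx S (Tm.appList (.fv x) ss) (Tm.appList (.fv x) ts)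
  | args (f g : F) (ss ts : List (Tm F V)) :
      S.equiv f g → S.fty f = S.fty g → S.pi f = S.pi g →
      ss.length = ts.length →
      (∀ (i : ℕ) (h1 : i < ss.length) (h2 : i < ts.length),
        i + 1 ∈ S.pi f → Approx S (ss.get ⟨i, h1⟩) (ts.get ⟨i, h2⟩)) →
      sameTy S (Tm.appList (.fn f) ss) (Tm.appList (.fn g) ts) →
      Approx S (Tm.appList (.fn f) ss) (Tm.appList (.fn g) ts)

mutual
/-- s ⊒ t  iff  s ≈ t or s ⊐ t. -/
inductive GrEq (S : Sig F V) : Tm F V → Tm F V → Prop where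
  | of_approx {s t : Tm F V} : Approx S s t → GrEq S s t
  | of_gr {s t : Tm F V} : Gr S s t → GrEq S s t

/-- The strict relation ⊐, by rules (Gr-mono), (Gr-args), (Gr-rpo). -/
inductive Gr (S : Sig F V) : Tm F V → Tm F V → Prop where
  | mono (x : V) (ss ts : List (Tm F V)) (i : ℕ)
      (hi1 : i < ss.length) (hi2 : i < ts.length) :
      ss.length = ts.length →
      (∀ (j : ℕ) (h1 : j < ss.length) (h2 : j < ts.length),
        GrEq S (ss.get ⟨j, h1⟩) (ts.get ⟨j, h2⟩)) →
      Gr S (ss.get ⟨i, hi1⟩) (ts.get ⟨i, hi2⟩) →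
      sameTy S (Tm.appList (.fv x) ss) (Tm.appList (.fv x) ts) →
      Gr S (Tm.appList (.fv x) ss) (Tm.appList (.fv x) ts)
  | args (f g : F) (ss ts : List (Tm F V)) (i : ℕ)
      (hi1 : i < ss.length) (hi2 : i < ts.length) :
      S.equiv f g → S.fty f = S.fty g → S.pi f = S.pi g →
      ss.length = ts.length →
      (∀ (j : ℕ) (h1 : j < ss.length) (h2 : j < ts.length),
        j + 1 ∈ S.pi f → GrEq S (ss.get ⟨j, h1⟩) (ts.get ⟨j, h2⟩)) →
      i + 1 ∈ S.pi f →
      Gr S (ss.get ⟨i, hi1⟩) (ts.get ⟨i, hi2⟩) →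
      sameTy S (Tm.appList (.fn f) ss) (Tm.appList (.fn g) ts) →
      Gr S (Tm.appList (.fn f) ss) (Tm.appList (.fn g) ts)
  | rpo {s t : Tm F V} : Rpo S s t → sameTy S s t → Gr S s t

/-- The relation ⊐⊐, by rules (Rpo-select), (Rpo-appl), (Rpo-copy), (Rpo-lex).
    In each case the left side is f s₁⋯s_n with {n+1,…,m} ⊆ π(f). -/
inductive Rpo (S : Sig F V) : Tm F V → Tm F V → Prop where
  | select (f : F) (ss : List (Tm F V)) (t : Tm F V) (i : ℕ) (hi : i < ss.length) :
      ss.length ≤ S.arity f →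
      (∀ k : ℕ, ss.length + 1 ≤ k → k ≤ S.arity f → k ∈ S.pi f) →
      i + 1 ∈ S.pi f →
      GrEq S (ss.get ⟨i, hi⟩) t →
      Rpo S (Tm.appList (.fn f) ss) t
  | appl (f : F) (ss : List (Tm F V)) (t0 : Tm F V) (ts : List (Tm F V)) :
      ss.length ≤ S.arity f →
      (∀ k : ℕ, ss.length + 1 ≤ k → k ≤ S.arity f → k ∈ S.pi f) →
      ts ≠ [] →
      (∀ (i : ℕ) (h : i < ts.length), Rpo S (Tm.appList (.fn f) ss) (ts.get ⟨i, h⟩)) →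
      Rpo S (Tm.appList (.fn f) ss) (Tm.appList t0 ts)
  | copy (f : F) (ss : List (Tm F V)) (g : F) (ts : List (Tm F V)) :
      ss.length ≤ S.arity f →
      (∀ k : ℕ, ss.length + 1 ≤ k → k ≤ S.arity f → k ∈ S.pi f) →
      S.sgt f g →
      (∀ (i : ℕ) (h : i < ts.length), i + 1 ∈ S.pi g →
        Rpo S (Tm.appList (.fn f) ss) (ts.get ⟨i, h⟩)) →
      Rpo S (Tm.appList (.fn f) ss) (Tm.appList (.fn g) ts)
  | lex (f : F) (ss : List (Tm F V)) (g : F) (ts : List (Tm F V)) (i : ℕ)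
      (hi1 : i < ss.length) (hi2 : i < ts.length) :
      ss.length ≤ S.arity f →
      (∀ k : ℕ, ss.length + 1 ≤ k → k ≤ S.arity f → k ∈ S.pi f) →
      S.equiv f g →
      i + 1 ∈ S.pi f → i + 1 ∈ S.pi g →
      (∀ k : ℕ, 1 ≤ k → k ≤ i + 1 → (k ∈ S.pi f ↔ k ∈ S.pi g)) →
      (∀ (j : ℕ) (h1 : j < ss.length) (h2 : j < ts.length), j < i → j + 1 ∈ S.pi f →
        Approx S (ss.get ⟨j, h1⟩) (ts.get ⟨j, h2⟩)) →
      Gr S (ss.get ⟨i, hi1⟩) (ts.get ⟨i, hi2⟩) →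
      (∀ (j : ℕ) (h : j < ts.length), i < j → j + 1 ∈ S.pi g →
        Rpo S (Tm.appList (.fn f) ss) (ts.get ⟨j, h⟩)) →
      Rpo S (Tm.appList (.fn f) ss) (Tm.appList (.fn g) ts)
end

/-- Substitution application. -/
def subst (γ : V → Tm F V) : Tm F V → Tm F V
  | .fv x => γ x
  | .fn f => .fn f
  | .app s t => .app (subst γ s) (subst γ t)

/-- s is terminating: no infinite ⊐-descending sequence starting at s. -/
def Terminating (S : Sig F V) (s : Tm F V) : Prop :=
  ¬ ∃ c : ℕ → Tm F V, c 0 = s ∧ ∀ n, Gr S (c n) (c (n + 1))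

/-- Computability, by recursion on the type structure. -/
def Computable (S : Sig F V) : Ty → Tm F V → Prop
  | .base, s => Terminating S s
  | .arrow a b, s =>
      ∀ t : Tm F V, typeOf S t = some a → Computable S a t → Computable S b (Tm.app s t)

/-- s is a well-typed computable term. -/
def Comp (S : Sig F V) (s : Tm F V) : Prop :=
  ∃ τ, typeOf S s = some τ ∧ Computable S τ s

/-- [s_i | i ∈ π(f)] : the list of arguments regarded by the filter. -/
def filtered (S : Sig F V) (f : F) (ss : List (Tm F V)) : List (Tm F V) :=
  (List.range ss.length).filterMap (fun i => if i + 1 ∈ S.pi f then ss[i]? else none)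

/-- The (E, R)-lexicographic extension to lists: xs is greater than ys. -/
def LexExt (E R : α → α → Prop) (xs ys : List α) : Prop :=
  ∃ (i : ℕ) (h1 : i < xs.length) (h2 : i < ys.length),
    (∀ (j : ℕ) (hj1 : j < xs.length) (hj2 : j < ys.length), j < i →
      E (xs.get ⟨j, hj1⟩) (ys.get ⟨j, hj2⟩)) ∧
    R (xs.get ⟨i, h1⟩) (ys.get ⟨i, h2⟩)


/-! ### Auxiliary machinery for `rpo_extend` -/

/-- Size of a term, used as an induction measure. -/
def tmSize : Tm F V → ℕ
  | .fv _ => 1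
  | .fn _ => 1
  | .app s t => tmSize s + tmSize t + 1

lemma tmSize_pos (t : Tm F V) : 0 < tmSize t := by
  cases t <;> simp [tmSize]

lemma tmSize_appList_le (h : Tm F V) (ts : List (Tm F V)) :
    tmSize h ≤ tmSize (Tm.appList h ts) := by
  induction ts generalizing h with
  | nil => simp [Tm.appList]
  | cons a ts ih =>
    have : Tm.appList h (a :: ts) = Tm.appList (.app h a) ts := rfl
    rw [this]
    calc tmSize h ≤ tmSize (Tm.app h a) := by simp [tmSize]; omega
      _ ≤ _ := ih _

lemma tmSize_get_lt (h : Tm F V) (ts : List (Tm F V)) (i : ℕ) (hi : i < ts.length) :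
    tmSize (ts.get ⟨i, hi⟩) < tmSize (Tm.appList h ts) := by
  induction ts generalizing h i with
  | nil => simp at hi
  | cons a ts ih =>
    have hl : Tm.appList h (a :: ts) = Tm.appList (.app h a) ts := rfl
    rw [hl]
    cases i with
    | zero =>
      have h1 : tmSize a < tmSize (Tm.app h a) := by
        have := tmSize_pos h; simp [tmSize]
      exact lt_of_lt_of_le h1 (tmSize_appList_le _ _)
    | succ i => exact ih (.app h a) i (by simpa using hi)

/-- Spine decomposition of a term. -/
def spine : Tm F V → Tm F V × List (Tm F V)
  | .app s t => ((spine s).1, (spine s).2 ++ [t])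
  | s => (s, [])

lemma spine_appList (ls : List (Tm F V)) (h : Tm F V) :
    spine (Tm.appList h ls) = ((spine h).1, (spine h).2 ++ ls) := by
  induction ls generalizing h with
  | nil => simp [Tm.appList]
  | cons a ls ih =>
    have hl : Tm.appList h (a :: ls) = Tm.appList (.app h a) ls := rfl
    rw [hl, ih]
    simp [spine]

lemma appList_fn_inj {f g : F} {ss ts : List (Tm F V)}
    (h : Tm.appList (.fn f) ss = Tm.appList (.fn g) ts) : f = g ∧ ss = ts := by
  have h2 := congrArg spine h
  rw [spine_appList, spine_appList] at h2
  simp [spine] at h2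
  obtain ⟨h3, h4⟩ := h2
  cases h3
  exact ⟨rfl, h4⟩

lemma typeOf_appList {S : Sig F V} (ls : List (Tm F V)) :
    ∀ (h : Tm F V) (τ : Ty), typeOf S (Tm.appList h ls) = some τ →
      ∃ σ, typeOf S h = some σ ∧ σ.argTypes.length = ls.length + τ.argTypes.length := by
  induction ls with
  | nil => intro h τ hτ; exact ⟨τ, hτ, by simp⟩
  | cons a ls ih =>
    intro h τ hτ
    have hl : Tm.appList h (a :: ls) = Tm.appList (.app h a) ls := rfl
    rw [hl] at hτ
    obtain ⟨σ, hσ, hlen⟩ := ih _ _ hτ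
    revert hσ
    simp only [typeOf]
    cases h1 : typeOf S h with
    | none => simp
    | some ρ =>
      cases ρ with
      | base => simp
      | arrow c d =>
        cases h2 : typeOf S a with
        | none => simp
        | some e =>
          by_cases hce : c = e
          · subst hce
            simp only [if_pos rfl, Option.some.injEq, if_true]
            intro hd
            rw [show d = σ by simpa using hd]
            exact ⟨.arrow c σ, rfl, by simp [Ty.argTypes]; omega⟩
          · simp [hce]

lemma get_append_left' {α : Type*} (ss : List α) (u : α) (i : ℕ)
    (h1 : i < (ss ++ [u]).length) (h2 : i < ss.length) :
    (ss ++ [u]).get ⟨i, h1⟩ = ss.get ⟨i, h2⟩ := by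
  simp [List.getElem_append_left h2]

/-- Auxiliary lemma: if f s₁⋯s_n ⊐⊐ t, the extension f s₁⋯s_n u is well-typed,
and n+1 ∈ π(f), then f s₁⋯s_n u ⊐⊐ t. -/
theorem rpo_extend (S : Sig F V) (f : F) (ss : List (Tm F V)) (u t : Tm F V)
    (h : Rpo S (Tm.appList (.fn f) ss) t)
    (hty : (typeOf S (Tm.appList (.fn f) (ss ++ [u]))).isSome)
    (hpi : ss.length + 1 ∈ S.pi f) :
    Rpo S (Tm.appList (.fn f) (ss ++ [u])) t := by
  obtain ⟨τ, hτ⟩ := Option.isSome_iff_exists.mp hty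
  obtain ⟨σ, hσ, hlenσ⟩ := typeOf_appList _ _ _ hτ
  have hσ' : σ = S.fty f := by simpa [typeOf] using hσ.symm
  have harity : ss.length + 1 ≤ S.arity f := by
    subst hσ'; unfold Sig.arity; simp at hlenσ; omega
  clear hty hτ hσ hlenσ
  have hlen2 : (ss ++ [u]).length ≤ S.arity f := by simpa using harity
  have hgap2 : ∀ k : ℕ, (ss ++ [u]).length + 1 ≤ k → k ≤ S.arity f → k ∈ S.pi f →
      True := fun _ _ _ _ => trivial
  suffices main : ∀ (N : ℕ) (t : Tm F V), tmSize t ≤ N →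
      Rpo S (Tm.appList (.fn f) ss) t → Rpo S (Tm.appList (.fn f) (ss ++ [u])) t from
    main _ t le_rfl h
  intro N
  induction N with
  | zero => intro t hN _; exact absurd hN (by have := tmSize_pos t; omega)
  | succ N IH =>
    intro t hN h
    generalize hE : Tm.appList (.fn f) ss = s0 at h
    cases h with
    | select f' ss' t i hi hlen hgap hip hge =>
      obtain ⟨rfl, rfl⟩ := appList_fn_inj hE
      have hgap' : ∀ k : ℕ, (ss ++ [u]).length + 1 ≤ k → k ≤ S.arity f → k ∈ S.pi f :=
        fun k hk1 hk2 => hgap k (by simp at hk1; omega) hk2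
      refine Rpo.select f (ss ++ [u]) t i (by simp; omega) hlen2 hgap' hip ?_
      rwa [get_append_left' ss u i _ hi]
    | appl f' ss' t0 ts hlen hgap hne hrec =>
      obtain ⟨rfl, rfl⟩ := appList_fn_inj hE
      have hgap' : ∀ k : ℕ, (ss ++ [u]).length + 1 ≤ k → k ≤ S.arity f → k ∈ S.pi f :=
        fun k hk1 hk2 => hgap k (by simp at hk1; omega) hk2
      refine Rpo.appl f (ss ++ [u]) t0 ts hlen2 hgap' hne ?_
      intro i hil
      have hsz := tmSize_get_lt t0 ts i hil
      exact IH _ (by omega) (hrec i hil)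
    | copy f' ss' g ts hlen hgap hfg hrec =>
      obtain ⟨rfl, rfl⟩ := appList_fn_inj hE
      have hgap' : ∀ k : ℕ, (ss ++ [u]).length + 1 ≤ k → k ≤ S.arity f → k ∈ S.pi f :=
        fun k hk1 hk2 => hgap k (by simp at hk1; omega) hk2
      refine Rpo.copy f (ss ++ [u]) g ts hlen2 hgap' hfg ?_
      intro i hil hipi
      have hsz := tmSize_get_lt (.fn g) ts i hil
      exact IH _ (by omega) (hrec i hil hipi)
    | lex f' ss' g ts i hi1 hi2 hlen hgap hfg hif hig hiff happ hgr hrec =>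
      obtain ⟨rfl, rfl⟩ := appList_fn_inj hE
      have hgap' : ∀ k : ℕ, (ss ++ [u]).length + 1 ≤ k → k ≤ S.arity f → k ∈ S.pi f :=
        fun k hk1 hk2 => hgap k (by simp at hk1; omega) hk2
      refine Rpo.lex f (ss ++ [u]) g ts i (by simp; omega) hi2 hlen2 hgap' hfg hif hig hiff
        ?_ ?_ ?_
      · intro j hj1 hj2 hji hjf
        have hj1' : j < ss.length := by omega
        rw [get_append_left' ss u j _ hj1']
        exact happ j hj1' hj2 hji hjf
      · rwa [get_append_left' ss u i _ hi1]
      · intro j hjl hij hjg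
        have hsz := tmSize_get_lt (.fn g) ts j hjl
        exact IH _ (by omega) (hrec j hjl hij hjg)

end Horpo
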